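/- For every n₂ ≤ L², within the set V*,n₂^{4n₂} of tb-tiled configurations with n₂ particles of type 2, the standard configurations achieve the minimal energy: every standard configuration η in V*,n₂^{4n₂} satisfies H(η) = min over ξ ∈ V*,n₂^{4n₂} of H(ξ). -/

import Mathlib

/- Common framework: two-type Kawasaki dynamics on a finite box in ℤ². -/

abbrev Site := ℤ × ℤ
abbrev Cell := ℤ × ℤ

/-- Nearest-neighbour adjacency on ℤ². -/
def adjacent (x y : Site) : Prop := |x.1 - y.1| + |x.2 - y.2| = 1

instance (x y : Site) : Decidable (adjacent x y) :=
  inferInstanceAs (Decidable (|x.1 - y.1| + |x.2 - y.2| = 1))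

/-- The four nearest neighbours of a site. -/
def nbrs (x : Site) : Finset Site :=
  {(x.1 + 1, x.2), (x.1 - 1, x.2), (x.1, x.2 + 1), (x.1, x.2 - 1)}

/-- Internal boundary ∂⁻Λ of a finite set Λ ⊂ ℤ². -/
def intBdry (Λ : Finset Site) : Finset Site := Λ.filter (fun x => ¬ nbrs x ⊆ Λ)

/-- Λ⁻ = Λ ∖ ∂⁻Λ. -/
def inner1 (Λ : Finset Site) : Finset Site := Λ \ intBdry Λ

/-- Λ⁻⁻ = Λ⁻ ∖ ∂⁻Λ⁻. -/
def inner2 (Λ : Finset Site) : Finset Site := inner1 Λ \ intBdry (inner1 Λ)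

/-- A configuration on Λ: each site of Λ carries 0 (empty), 1 (type 1) or 2 (type 2);
sites outside Λ are empty. -/
structure Config (Λ : Finset Site) where
  val : Site → Fin 3
  zero_outside : ∀ x, x ∉ Λ → val x = 0

/-- Number of particles of type 1. -/
def numType1 {Λ : Finset Site} (η : Config Λ) : ℕ := (Λ.filter (fun x => η.val x = 1)).card

/-- Number of particles of type 2. -/
def numType2 {Λ : Finset Site} (η : Config Λ) : ℕ := (Λ.filter (fun x => η.val x = 2)).card

/-- Number of active bonds: unordered n.n. pairs of sites of Λ⁻, one carrying a 1 and the
other a 2 (each such unordered pair is counted once, as the ordered pair (type1,type2)). -/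
def numBonds {Λ : Finset Site} (η : Config Λ) : ℕ :=
  ((inner1 Λ ×ˢ inner1 Λ).filter
    (fun p => adjacent p.1 p.2 ∧ η.val p.1 = 1 ∧ η.val p.2 = 2)).card

/-- The Hamiltonian H(η) = −U·B(η) + Δ1·n1(η) + Δ2·n2(η). -/
noncomputable def energy (U Δ1 Δ2 : ℝ) {Λ : Finset Site} (η : Config Λ) : ℝ :=
  -U * numBonds η + Δ1 * numType1 η + Δ2 * numType2 η

/-- Allowed moves of the Kawasaki dynamics: hopping inside Λ, creation and annihilation
at the internal boundary. -/
def Communicates {Λ : Finset Site} (η η' : Config Λ) : Prop :=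
  (∃ x ∈ Λ, ∃ y ∈ Λ, adjacent x y ∧ η.val x = 0 ∧ η.val y ≠ 0 ∧
      η'.val = Function.update (Function.update η.val x (η.val y)) y 0) ∨
  (∃ x ∈ intBdry Λ, ∃ v : Fin 3, v ≠ 0 ∧ η.val x = 0 ∧
      η'.val = Function.update η.val x v) ∨
  (∃ x ∈ intBdry Λ, η.val x ≠ 0 ∧ η'.val = Function.update η.val x 0)

/-- ω is a path of allowed moves from η to η′. -/
def IsPath {Λ : Finset Site} (ω : List (Config Λ)) (η η' : Config Λ) : Prop :=
  ω.head? = some η ∧ ω.getLast? = some η' ∧ ω.Chain' Communicates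

/-- Communication height between two sets of configurations:
Φ(A,B) = min over paths from A to B of the maximal energy along the path. -/
noncomputable def commHeightSet (U Δ1 Δ2 : ℝ) {Λ : Finset Site}
    (A B : Set (Config Λ)) : ℝ :=
  sInf {m : ℝ | ∃ η ∈ A, ∃ η' ∈ B, ∃ ω : List (Config Λ),
    IsPath ω η η' ∧ ∀ ξ ∈ ω, energy U Δ1 Δ2 ξ ≤ m}

/-- Communication height Φ(η,η′). -/
noncomputable def commHeight (U Δ1 Δ2 : ℝ) {Λ : Finset Site} (η η' : Config Λ) : ℝ :=
  commHeightSet U Δ1 Δ2 {η} {η'}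

/-- Stability level V_η = Φ(η, I_η) − H(η), where I_η = {ξ : H(ξ) < H(η)}. -/
noncomputable def stabLevel (U Δ1 Δ2 : ℝ) {Λ : Finset Site} (η : Config Λ) : ℝ :=
  commHeightSet U Δ1 Δ2 {η} {ξ : Config Λ | energy U Δ1 Δ2 ξ < energy U Δ1 Δ2 η}
    - energy U Δ1 Δ2 η

/-- The set of stable configurations (global minimizers of H). -/
def Xstab (U Δ1 Δ2 : ℝ) (Λ : Finset Site) : Set (Config Λ) :=
  {η | ∀ ξ : Config Λ, energy U Δ1 Δ2 η ≤ energy U Δ1 Δ2 ξ}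

/-- The set of metastable configurations (non-stable configurations of maximal
stability level). -/
def Xmeta (U Δ1 Δ2 : ℝ) (Λ : Finset Site) : Set (Config Λ) :=
  {η | η ∉ Xstab U Δ1 Δ2 Λ ∧
    ∀ ξ : Config Λ, ξ ∉ Xstab U Δ1 Δ2 Λ → stabLevel U Δ1 Δ2 ξ ≤ stabLevel U Δ1 Δ2 η}

/-- The empty configuration □. -/
def emptyConfig (Λ : Finset Site) : Config Λ := ⟨fun _ => 0, fun _ _ => rfl⟩

/-- The critical length ℓ* = ⌈Δ1/(4U − Δ1 − Δ2)⌉. -/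
noncomputable def lstar (U Δ1 Δ2 : ℝ) : ℤ := ⌈Δ1 / (4 * U - Δ1 - Δ2)⌉

/-- The box Λ: in dual coordinates u(x) = ((x1−x2)/2,(x1+x2)/2) the
(L+3/2)×(L+3/2) square centered at the origin, i.e. |x1−x2| ≤ L+1 and |x1+x2| ≤ L+1. -/
noncomputable def latBox (L : ℕ) : Finset Site :=
  (Finset.Icc (-(L : ℤ) - 1) ((L : ℤ) + 1) ×ˢ Finset.Icc (-(L : ℤ) - 1) ((L : ℤ) + 1)).filter
    (fun x => |x.1 - x.2| ≤ (L : ℤ) + 1 ∧ |x.1 + x.2| ≤ (L : ℤ) + 1)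

/-- The m×n dual rectangle of sites (in dual coordinates) with dual lower-left corner p
(in standard coordinates): sites p + i·(1,−1) + j·(1,1) for 0 ≤ i < m, 0 ≤ j < n.
All these sites have the same parity. -/
def dualRect (p : Site) (m n : ℕ) : Finset Site :=
  (Finset.range m ×ˢ Finset.range n).image
    (fun ij => ((p.1 + (ij.1 : ℤ) + (ij.2 : ℤ), p.2 + (ij.2 : ℤ) - (ij.1 : ℤ)) : Site))

/-- The sites adjacent to a set S but not in S. -/
def siteBorder (S : Finset Site) : Finset Site := S.biUnion nbrs \ S

/-- ⊞: the tb-tiled configurations whose particles of type 2 occupy an L×L square in dual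
coordinates filling Λ⁻ (type-2 sites in Λ⁻⁻, surrounding type-1 sites in Λ⁻); these are
the two largest checkerboard droplets (one of each parity). -/
def boxPlus (L : ℕ) : Set (Config (latBox L)) :=
  {η | ∃ p : Site,
      (∀ x, η.val x = 2 ↔ x ∈ dualRect p L L) ∧
      (∀ x, η.val x = 1 ↔ x ∈ siteBorder (dualRect p L L)) ∧
      dualRect p L L ⊆ inner2 (latBox L) ∧
      siteBorder (dualRect p L L) ⊆ inner1 (latBox L)}

/-- The active-bond relation between sites. -/
def bondRel {Λ : Finset Site} (η : Config Λ) (x y : Site) : Prop :=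
  x ∈ inner1 Λ ∧ y ∈ inner1 Λ ∧ adjacent x y ∧
  ((η.val x = 1 ∧ η.val y = 2) ∨ (η.val x = 2 ∧ η.val y = 1))

/-- C is a cluster of η: a maximal connected component of the occupied sites under the
active-bond relation. -/
def IsCluster {Λ : Finset Site} (η : Config Λ) (C : Finset Site) : Prop :=
  ∃ x : Site, η.val x ≠ 0 ∧ ∀ y : Site, y ∈ C ↔ Relation.ReflTransGen (bondRel η) x y

/-- The occupied sites of η form a single cluster. -/
def SingleCluster {Λ : Finset Site} (η : Config Λ) : Prop :=
  ∃ x : Site, η.val x ≠ 0 ∧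
    ∀ y : Site, η.val y ≠ 0 → Relation.ReflTransGen (bondRel η) x y

/-- Dual coordinates, renormalized to land in ℤ² (within a fixed parity class this maps
dual neighbours to adjacent cells). -/
def cellOf (x : Site) : Cell := ((x.1 - x.2).fdiv 2, (x.1 + x.2).fdiv 2)

/-- The sites of Λ occupied by particles of type 2. -/
def type2Sites {Λ : Finset Site} (η : Config Λ) : Finset Site :=
  Λ.filter (fun x => η.val x = 2)

/-- Tile support of a configuration: the polyomino in dual coordinates given by the unit
squares centered at the particles of type 2. -/
def tileSupport {Λ : Finset Site} (η : Config Λ) : Finset Cell :=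
  (type2Sites η).image cellOf

/- ----------  Polyominoes ---------- -/

/-- Perimeter of a polyomino (number of boundary edges, inner boundaries included). -/
def perim (A : Finset Cell) : ℕ :=
  A.sum (fun c => ((nbrs c).filter (fun d => d ∉ A)).card)

def adjIn (A : Finset Cell) (x y : Cell) : Prop := x ∈ A ∧ y ∈ A ∧ adjacent x y

/-- Connectedness of a polyomino. -/
def PolyConnected (A : Finset Cell) : Prop :=
  A.Nonempty ∧ ∀ x ∈ A, ∀ y ∈ A, Relation.ReflTransGen (adjIn A) x y

/-- Number of holes: bounded (= finite) connected components of the complement. -/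
noncomputable def numHoles (A : Finset Cell) : ℕ :=
  Set.ncard {C : Set Cell | ∃ d : Cell, d ∉ A ∧
    C = {e : Cell | Relation.ReflTransGen (fun u v => adjacent u v ∧ u ∉ A ∧ v ∉ A) d e} ∧
    C.Finite}

/-- The four cells having lattice point v as a corner. -/
def cellsAt (v : Cell) : Finset Cell :=
  {(v.1 - 1, v.2 - 1), (v.1 - 1, v.2), (v.1, v.2 - 1), v}

/-- The lattice points that are corners of cells of A. -/
def vertexSet (A : Finset Cell) : Finset Cell :=
  A.biUnion (fun c => {c, (c.1 + 1, c.2), (c.1, c.2 + 1), (c.1 + 1, c.2 + 1)})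

def occAt (A : Finset Cell) (v : Cell) : ℕ := ((cellsAt v).filter (fun c => c ∈ A)).card

/-- Number of convex corners ψ(A): vertices with exactly one incident occupied cell. -/
def convexCorners (A : Finset Cell) : ℕ :=
  (vertexSet A).sum (fun v => if occAt A v = 1 then 1 else 0)

/-- Number of concave corners φ(A): a vertex with three incident occupied cells counts
once, a vertex with two diagonally opposite occupied cells counts twice. -/
def concaveCorners (A : Finset Cell) : ℕ :=
  (vertexSet A).sum (fun v =>
    if occAt A v = 3 then 1
    else if occAt A v = 2 ∧ (((v.1 - 1, v.2 - 1) ∈ A ∧ v ∈ A) ∨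
          ((v.1 - 1, v.2) ∈ A ∧ (v.1, v.2 - 1) ∈ A)) then 2
    else 0)

/-- T(A) = 2P(A) + ψ(A) − φ(A). -/
def Tpoly (A : Finset Cell) : ℤ :=
  2 * (perim A : ℤ) + (convexCorners A : ℤ) - (concaveCorners A : ℤ)

/-- For connected polyominoes, T(A) = 2P(A) + 4 − 4Q(A). -/
noncomputable def Tconn (A : Finset Cell) : ℤ :=
  2 * (perim A : ℤ) + 4 - 4 * (numHoles A : ℤ)

/-- Width (number of columns) of the circumscribing rectangle. -/
def polyWidth (A : Finset Cell) : ℤ :=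
  (WithBot.unbotD 0 (A.image Prod.fst).max) - (WithTop.untopD 0 (A.image Prod.fst).min) + 1

/-- Height (number of rows) of the circumscribing rectangle. -/
def polyHeight (A : Finset Cell) : ℤ :=
  (WithBot.unbotD 0 (A.image Prod.snd).max) - (WithTop.untopD 0 (A.image Prod.snd).min) + 1

/-- A polyomino is monotone if its perimeter equals the perimeter of its circumscribing
rectangle. -/
def MonotonePoly (A : Finset Cell) : Prop :=
  (perim A : ℤ) = 2 * (polyWidth A + polyHeight A)

/-- The reference standard polyomino: an (l+ζ)×l rectangle (quasi-square, ζ ∈ {0,1})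
with a bar of length k attached to a longest side, starting at offset a. -/
def baseStd (l ζ a k : ℕ) : Finset Cell :=
  ((Finset.range (l + ζ)) ×ˢ (Finset.range l)).image
      (fun q => (((q.1 : ℤ), (q.2 : ℤ)) : Cell))
    ∪ (Finset.range k).image (fun i => ((((a + i : ℕ) : ℤ), (l : ℤ)) : Cell))

/-- The eight symmetries of the square lattice. -/
def dihedralMaps : List (Cell → Cell) :=
  [fun c => (c.1, c.2), fun c => (-c.1, c.2), fun c => (c.1, -c.2), fun c => (-c.1, -c.2),
   fun c => (c.2, c.1), fun c => (-c.2, c.1), fun c => (c.2, -c.1), fun c => (-c.2, -c.1)]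

/-- A standard polyomino: a quasi-square with possibly a bar attached to one of its
longest sides (up to lattice symmetries and translations). -/
def IsStandardPoly (A : Finset Cell) : Prop :=
  ∃ l ζ a k : ℕ, 1 ≤ l ∧ ζ ≤ 1 ∧ a + k ≤ l + ζ ∧
    ∃ f ∈ dihedralMaps, ∃ t : Cell,
      A = (baseStd l ζ a k).image (fun c => (((f c).1 + t.1, (f c).2 + t.2) : Cell))

/- ----------  tb-tiled configurations ---------- -/

/-- V_{*,k}: configurations with exactly k particles of type 2, all lying in Λ⁻⁻. -/
def VStar (Λ : Finset Site) (k : ℕ) : Set (Config Λ) :=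
  {η | numType2 η = k ∧ ∀ x, η.val x = 2 → x ∈ inner2 Λ}

/-- V_{*,k}^{4k}: configurations of V_{*,k} with exactly 4k active bonds and no isolated
particle of type 1 (the tb-tiled configurations with k particles of type 2). -/
def VTiled (Λ : Finset Site) (k : ℕ) : Set (Config Λ) :=
  {η | η ∈ VStar Λ k ∧ numBonds η = 4 * k ∧
    ∀ x, η.val x = 1 → ∃ y ∈ nbrs x, η.val y = 2}

/-- All particles of type 2 have the same (site) parity. -/
def SameParity2 {Λ : Finset Site} (η : Config Λ) : Prop :=
  ∀ x y : Site, η.val x = 2 → η.val y = 2 → (x.1 + x.2) % 2 = (y.1 + y.2) % 2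

/-- A standard configuration: tile support a standard polyomino (all type-2 particles of
one parity). -/
def IsStandardConfig {Λ : Finset Site} (η : Config Λ) : Prop :=
  SameParity2 η ∧ IsStandardPoly (tileSupport η)

/-- A tb-tiled configuration: at least one particle of type 2, every particle of type 2
saturated, no isolated particle of type 1. -/
def IsTbTiled {Λ : Finset Site} (η : Config Λ) : Prop :=
  (∃ x, η.val x = 2) ∧
  (∀ x, η.val x = 2 → ∀ y ∈ nbrs x, η.val y = 1) ∧
  (∀ x, η.val x = 1 → ∃ y ∈ nbrs x, η.val y = 2)

/-- η is the tb-tiled droplet with type-2 sites S: type-2 exactly on S, type-1 exactly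
on the border of S, empty elsewhere. -/
def IsTbDroplet {Λ : Finset Site} (η : Config Λ) (S : Finset Site) : Prop :=
  (∀ x, η.val x = 2 ↔ x ∈ S) ∧ (∀ x, η.val x = 1 ↔ x ∈ siteBorder S)

/- ----------  cluster-wise quantities ---------- -/

def numType1In {Λ : Finset Site} (η : Config Λ) (C : Finset Site) : ℕ :=
  (C.filter (fun x => η.val x = 1)).card

def numType2In {Λ : Finset Site} (η : Config Λ) (C : Finset Site) : ℕ :=
  (C.filter (fun x => η.val x = 2)).card

def numBondsIn {Λ : Finset Site} (η : Config Λ) (C : Finset Site) : ℕ :=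
  ((C ×ˢ C).filter (fun q => q.1 ∈ inner1 Λ ∧ q.2 ∈ inner1 Λ ∧ adjacent q.1 q.2 ∧
    η.val q.1 = 1 ∧ η.val q.2 = 2)).card

def tileSupportIn {Λ : Finset Site} (η : Config Λ) (C : Finset Site) : Finset Cell :=
  (C.filter (fun x => η.val x = 2)).image cellOf

/-- Number of active bonds incident to the site x. -/
def bondDeg {Λ : Finset Site} (η : Config Λ) (x : Site) : ℕ :=
  ((nbrs x).filter (fun y => x ∈ inner1 Λ ∧ y ∈ inner1 Λ ∧
    ((η.val x = 1 ∧ η.val y = 2) ∨ (η.val x = 2 ∧ η.val y = 1)))).card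

/-- Number of missing bonds of the type-1 particles of C. -/
def missingBonds {Λ : Finset Site} (η : Config Λ) (C : Finset Site) : ℤ :=
  ∑ x ∈ C.filter (fun x => η.val x = 1), (4 - (bondDeg η x : ℤ))

/- ----------  geometry for the energy-reduction mechanisms ---------- -/

/-- A site is lattice-connecting: there is a n.n. path of empty sites from it to ∂⁻Λ. -/
def LatticeConnecting {Λ : Finset Site} (η : Config Λ) (x : Site) : Prop :=
  ∃ l : List Site, List.Chain adjacent x l ∧
    (x :: l).getLast (List.cons_ne_nil x l) ∈ intBdry Λ ∧
    ∀ y ∈ l, y ∈ Λ ∧ η.val y = 0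

/-- A pending dimer (x,y): a lattice-connecting type-1 particle x whose unique active
bond is with the adjacent type-2 particle y, which has at most three active bonds. -/
def PendingDimer {Λ : Finset Site} (η : Config Λ) (x y : Site) : Prop :=
  bondRel η x y ∧ η.val x = 1 ∧ η.val y = 2 ∧ LatticeConnecting η x ∧
  bondDeg η x = 1 ∧ bondDeg η y ≤ 3

/-- The sites of a horizontal (in dual coordinates) beam of length l: l+1 particles of
type 1 at mutual dual distance 1, with left-most site p. -/
def beamSites (p : Site) (l : ℕ) : Finset Site :=
  (Finset.range (l + 1)).image (fun i : ℕ => ((p.1 + (i : ℤ), p.2 - (i : ℤ)) : Site))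

/-- The center row of the (south) support of the beam. -/
def centerSites (p : Site) (l : ℕ) : Finset Site :=
  (Finset.range l).image (fun i : ℕ => ((p.1 + (i : ℤ), p.2 - 1 - (i : ℤ)) : Site))

/-- The basement row of the (south) support of the beam. -/
def basementSites (p : Site) (l : ℕ) : Finset Site :=
  (Finset.range (l + 1)).image (fun i : ℕ => ((p.1 - 1 + (i : ℤ), p.2 - 1 - (i : ℤ)) : Site))

/-- The (south) support of a beam/bridge. -/
def bridgeSupport (p : Site) (l : ℕ) : Finset Site :=
  beamSites p l ∪ centerSites p l ∪ basementSites p l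

/-- The 12 sites of a slot: a 4×4 block minus its four corner sites; p is the lower-left
corner of the block. -/
def slotSites (p : Site) : Finset Site :=
  ((Finset.range 4 ×ˢ Finset.range 4).image
      (fun ij => ((p.1 + (ij.1 : ℤ), p.2 + (ij.2 : ℤ)) : Site))) \
    {(p.1, p.2), (p.1 + 3, p.2), (p.1, p.2 + 3), (p.1 + 3, p.2 + 3)}

/-- The slot-conjugate (diagonally opposite) ordered pairs of central sites of a slot. -/
def slotDiagPairs (p : Site) : List (Site × Site) :=
  [((p.1 + 1, p.2 + 1), (p.1 + 2, p.2 + 2)), ((p.1 + 2, p.2 + 2), (p.1 + 1, p.2 + 1)),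
   ((p.1 + 1, p.2 + 2), (p.1 + 2, p.2 + 1)), ((p.1 + 2, p.2 + 1), (p.1 + 1, p.2 + 2))]

/-- The type-2 sites of the bar added on side d (0 = north, 1 = south, 2 = east,
3 = west, in dual coordinates) of the m×n dual rectangle with corner p. -/
def sideBar (p : Site) (m n : ℕ) (d : Fin 4) : Finset Site :=
  if d = 0 then dualRect (p.1 + (n : ℤ), p.2 + (n : ℤ)) m 1
  else if d = 1 then dualRect (p.1 - 1, p.2 - 1) m 1
  else if d = 2 then dualRect (p.1 + (m : ℤ), p.2 - (m : ℤ)) 1 n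
  else dualRect (p.1 - 1, p.2 + 1) 1 n

/-- The length of side d of an m×n dual rectangle. -/
def sideLen (m n : ℕ) (d : Fin 4) : ℕ := if (d : ℕ) ≤ 1 then m else n

/-- The type-2 sites left after removing the outermost bar on side d of the m×n dual
rectangle with corner p. -/
def shrunkRect (p : Site) (m n : ℕ) (d : Fin 4) : Finset Site :=
  if d = 0 then dualRect p m (n - 1)
  else if d = 1 then dualRect (p.1 + 1, p.2 + 1) m (n - 1)
  else if d = 2 then dualRect p (m - 1) n
  else dualRect (p.1 + 1, p.2 - 1) (m - 1) n

section Helpers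

lemma mem_nbrs {x y : Site} : y ∈ nbrs x ↔ adjacent x y := by
  obtain ⟨a, b⟩ := x; obtain ⟨c, d⟩ := y
  simp only [nbrs, adjacent, Finset.mem_insert, Finset.mem_singleton, Prod.mk.injEq]
  rcases abs_cases (a - c) with ⟨h1, _⟩ | ⟨h1, _⟩ <;>
    rcases abs_cases (b - d) with ⟨h2, _⟩ | ⟨h2, _⟩ <;> omega

lemma nbrs_symm {x y : Site} : y ∈ nbrs x ↔ x ∈ nbrs y := by
  simp only [mem_nbrs, adjacent, abs_sub_comm x.1 y.1, abs_sub_comm x.2 y.2]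

lemma card_nbrs (x : Site) : (nbrs x).card = 4 := by
  obtain ⟨a, b⟩ := x
  simp only [nbrs]
  rw [Finset.card_insert_of_notMem, Finset.card_insert_of_notMem,
    Finset.card_insert_of_notMem, Finset.card_singleton] <;>
    simp [Prod.ext_iff] <;> omega

lemma parity_nbrs {x y : Site} (h : y ∈ nbrs x) :
    (y.1 + y.2) % 2 = 1 - (x.1 + x.2) % 2 := by
  obtain ⟨a, b⟩ := x
  simp only [nbrs, Finset.mem_insert, Finset.mem_singleton] at h
  rcases h with h | h | h | h <;> subst h <;> simp <;> omega

end Helpers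
section CellOf

lemma cellOf_even (i j : ℤ) : cellOf (i + j, j - i) = (i, j) := by
  simp only [cellOf]
  have h1 : i + j - (j - i) = i * 2 := by ring
  have h2 : i + j + (j - i) = j * 2 := by ring
  rw [h1, h2, Int.mul_fdiv_cancel _ (by norm_num), Int.mul_fdiv_cancel _ (by norm_num)]

lemma cellOf_odd (i j : ℤ) : cellOf (i + j + 1, j - i) = (i, j) := by
  simp only [cellOf]
  have h1 : i + j + 1 - (j - i) = 2 * i + 1 := by ring
  have h2 : i + j + 1 + (j - i) = 2 * j + 1 := by ring
  rw [h1, h2, Int.fdiv_eq_ediv_of_nonneg _ (by norm_num), Int.fdiv_eq_ediv_of_nonneg _ (by norm_num),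
    Prod.mk.injEq]
  omega

lemma even_param {x : Site} (h : (x.1 + x.2) % 2 = 0) :
    ∃ i j : ℤ, x = (i + j, j - i) := by
  exact ⟨(x.1 - x.2) / 2, (x.1 + x.2) / 2, by obtain ⟨a, b⟩ := x; simp [Prod.ext_iff]; omega⟩

lemma odd_param {x : Site} (h : (x.1 + x.2) % 2 = 1) :
    ∃ i j : ℤ, x = (i + j + 1, j - i) := by
  exact ⟨(x.1 - x.2 - 1) / 2, (x.1 + x.2 - 1) / 2, by obtain ⟨a, b⟩ := x; simp [Prod.ext_iff]; omega⟩

lemma cellOf_injOn_parity {x y : Site} (hp : (x.1 + x.2) % 2 = (y.1 + y.2) % 2)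
    (h : cellOf x = cellOf y) : x = y := by
  rcases (by omega : (x.1 + x.2) % 2 = 0 ∨ (x.1 + x.2) % 2 = 1) with h2 | h2
  · have hy : (y.1 + y.2) % 2 = 0 := by omega
    obtain ⟨i, j, hx⟩ := even_param h2
    obtain ⟨i', j', hy'⟩ := even_param hy
    subst hx; subst hy'
    rw [cellOf_even, cellOf_even, Prod.mk.injEq] at h
    rw [Prod.mk.injEq]; omega
  · have hy : (y.1 + y.2) % 2 = 1 := by omega
    obtain ⟨i, j, hx⟩ := odd_param h2
    obtain ⟨i', j', hy'⟩ := odd_param hy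
    subst hx; subst hy'
    rw [cellOf_odd, cellOf_odd, Prod.mk.injEq] at h
    rw [Prod.mk.injEq]; omega

/-- the set of the four cells ≥ c (vertex picture). -/
def uset (c : Cell) : Finset Cell := {c, (c.1 + 1, c.2), (c.1, c.2 + 1), (c.1 + 1, c.2 + 1)}

def UU (A : Finset Cell) : Finset Cell := A.biUnion uset

lemma image_nbrs_even {x : Site} (h : (x.1 + x.2) % 2 = 0) :
    (nbrs x).image cellOf = uset ((cellOf x).1 - 1, (cellOf x).2 - 1) := by
  obtain ⟨i, j, rfl⟩ := even_param h
  rw [cellOf_even]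
  have e1 : cellOf (i + j + 1, j - i) = (i, j) := cellOf_odd i j
  have e2 : cellOf (i + j - 1, j - i) = (i - 1, j - 1) := by
    have : ((i:ℤ) + j - 1, (j:ℤ) - i) = ((i - 1) + (j - 1) + 1, (j - 1) - (i - 1)) := by
      rw [Prod.mk.injEq]; omega
    rw [this, cellOf_odd]
  have e3 : cellOf (i + j, j - i + 1) = (i - 1, j) := by
    have : ((i:ℤ) + j, (j:ℤ) - i + 1) = ((i - 1) + j + 1, j - (i - 1)) := by
      rw [Prod.mk.injEq]; omega
    rw [this, cellOf_odd]
  have e4 : cellOf (i + j, j - i - 1) = (i, j - 1) := by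
    have : ((i:ℤ) + j, (j:ℤ) - i - 1) = (i + (j - 1) + 1, (j - 1) - i) := by
      rw [Prod.mk.injEq]; omega
    rw [this, cellOf_odd]
  simp only [nbrs, Finset.image_insert, Finset.image_singleton, e1, e2, e3, e4, uset]
  ext c
  simp only [Finset.mem_insert, Finset.mem_singleton, Prod.ext_iff]
  omega

lemma image_nbrs_odd {x : Site} (h : (x.1 + x.2) % 2 = 1) :
    (nbrs x).image cellOf = uset (cellOf x) := by
  obtain ⟨i, j, rfl⟩ := odd_param h
  rw [cellOf_odd]
  have e1 : cellOf (i + j + 1 + 1, j - i) = (i + 1, j + 1) := by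
    have : ((i:ℤ) + j + 1 + 1, (j:ℤ) - i) = ((i + 1) + (j + 1), (j + 1) - (i + 1)) := by
      rw [Prod.mk.injEq]; omega
    rw [this, cellOf_even]
  have e2 : cellOf (i + j + 1 - 1, j - i) = (i, j) := by
    have : ((i:ℤ) + j + 1 - 1, (j:ℤ) - i) = (i + j, j - i) := by simp
    rw [this, cellOf_even]
  have e3 : cellOf (i + j + 1, j - i + 1) = (i, j + 1) := by
    have : ((i:ℤ) + j + 1, (j:ℤ) - i + 1) = (i + (j + 1), (j + 1) - i) := by
      rw [Prod.mk.injEq]; omega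
    rw [this, cellOf_even]
  have e4 : cellOf (i + j + 1, j - i - 1) = (i + 1, j) := by
    have : ((i:ℤ) + j + 1, (j:ℤ) - i - 1) = ((i + 1) + j, j - (i + 1)) := by
      rw [Prod.mk.injEq]; omega
    rw [this, cellOf_even]
  simp only [nbrs, Finset.image_insert, Finset.image_singleton, e1, e2, e3, e4, uset]
  ext c
  simp only [Finset.mem_insert, Finset.mem_singleton, Prod.ext_iff]
  omega

end CellOf
section Iso

lemma iso_lower (A : Finset Cell) (hA : A.Nonempty) :
    ∃ r m : ℕ, 1 ≤ r ∧ 1 ≤ m ∧ A.card ≤ r * m ∧ A.card + r + m + 1 ≤ (UU A).card := by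
  classical
  set R : Finset ℤ := A.image Prod.snd with hR
  have hRne : R.Nonempty := hA.image _
  set n : ℤ → ℕ := fun t => (A.filter (fun c => c.2 = t)).card with hn
  -- row vertex sets
  set X : ℤ → Finset ℤ := fun t => (A.filter (fun c => c.2 = t)).image Prod.fst with hX
  set g : ℤ → Finset ℤ := fun t => X t ∪ (X t).image (· + 1) with hg
  have hXcard : ∀ t, (X t).card = n t := by
    intro t
    apply Finset.card_image_of_injOn
    intro c hc d hd hcd
    simp only [hX, Finset.mem_coe, Finset.mem_filter] at hc hd
    exact Prod.ext hcd (hc.2.trans hd.2.symm)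
  have hgcard : ∀ t ∈ R, n t + 1 ≤ (g t).card := by
    intro t ht
    have hXne : (X t).Nonempty := by
      simp only [hR, Finset.mem_image] at ht
      obtain ⟨c, hc, hct⟩ := ht
      exact ⟨c.1, Finset.mem_image_of_mem _ (Finset.mem_filter.2 ⟨hc, hct⟩)⟩
    have hmax : (X t).max' hXne + 1 ∉ X t := by
      intro hmem
      have := Finset.le_max' _ _ hmem
      omega
    have hsub : insert ((X t).max' hXne + 1) (X t) ⊆ g t := by
      intro z hz
      rcases Finset.mem_insert.1 hz with hz | hz
      · exact Finset.mem_union_right _ (hz ▸ Finset.mem_image_of_mem _ ((X t).max'_mem hXne))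
      · exact Finset.mem_union_left _ hz
    calc n t + 1 = (insert ((X t).max' hXne + 1) (X t)).card := by
          rw [Finset.card_insert_of_notMem hmax, hXcard]
      _ ≤ (g t).card := Finset.card_le_card hsub
  -- membership of vertices
  have hup1 : ∀ t, ∀ x ∈ g t, ((x, t) : Cell) ∈ UU A := by
    intro t x hx
    rcases Finset.mem_union.1 hx with hx | hx
    · obtain ⟨c, hc, rfl⟩ := Finset.mem_image.1 hx
      have hc' := Finset.mem_filter.1 hc
      refine Finset.mem_biUnion.2 ⟨c, hc'.1, ?_⟩
      simp [uset, ← hc'.2]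
    · obtain ⟨x', hx', rfl⟩ := Finset.mem_image.1 hx
      obtain ⟨c, hc, rfl⟩ := Finset.mem_image.1 hx'
      have hc' := Finset.mem_filter.1 hc
      refine Finset.mem_biUnion.2 ⟨c, hc'.1, ?_⟩
      simp [uset, ← hc'.2]
  have hup2 : ∀ t, ∀ x ∈ g t, ((x, t + 1) : Cell) ∈ UU A := by
    intro t x hx
    rcases Finset.mem_union.1 hx with hx | hx
    · obtain ⟨c, hc, rfl⟩ := Finset.mem_image.1 hx
      have hc' := Finset.mem_filter.1 hc
      refine Finset.mem_biUnion.2 ⟨c, hc'.1, ?_⟩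
      simp [uset, ← hc'.2, Prod.ext_iff]
    · obtain ⟨x', hx', rfl⟩ := Finset.mem_image.1 hx
      obtain ⟨c, hc, rfl⟩ := Finset.mem_image.1 hx'
      have hc' := Finset.mem_filter.1 hc
      refine Finset.mem_biUnion.2 ⟨c, hc'.1, ?_⟩
      simp [uset, ← hc'.2, Prod.ext_iff]
  set F : ℤ → ℕ := fun s => ((UU A).filter (fun c => c.2 = s)).card with hF
  have hgF1 : ∀ t, (g t).card ≤ F t := by
    intro t
    apply Finset.card_le_card_of_injOn (fun x => ((x, t) : Cell))
    · intro x hx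
      exact Finset.mem_filter.2 ⟨hup1 t x hx, rfl⟩
    · intro x _ y _ h
      exact congrArg Prod.fst h
  have hgF2 : ∀ t, (g t).card ≤ F (t + 1) := by
    intro t
    apply Finset.card_le_card_of_injOn (fun x => ((x, t + 1) : Cell))
    · intro x hx
      exact Finset.mem_filter.2 ⟨hup2 t x hx, rfl⟩
    · intro x _ y _ h
      exact congrArg Prod.fst h
  set Lv : Finset ℤ := (UU A).image Prod.snd with hLv
  have hRL : ∀ t ∈ R, t ∈ Lv ∧ t + 1 ∈ Lv := by
    intro t ht
    simp only [hR, Finset.mem_image] at ht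
    obtain ⟨c, hc, hct⟩ := ht
    constructor
    · exact Finset.mem_image.2 ⟨c, Finset.mem_biUnion.2 ⟨c, hc, by simp [uset]⟩, hct⟩
    · refine Finset.mem_image.2 ⟨(c.1, c.2 + 1), Finset.mem_biUnion.2 ⟨c, hc, by
        simp [uset, Prod.ext_iff]⟩, by simp [hct]⟩
  have hcardUU : (UU A).card = ∑ s ∈ Lv, F s :=
    Finset.card_eq_sum_card_image Prod.snd (UU A)
  -- choose the max row
  obtain ⟨tstar, htstar, hmaxrow⟩ := Finset.exists_max_image R n hRne
  refine ⟨R.card, n tstar, hRne.card_pos, ?_, ?_, ?_⟩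
  · have : (A.filter (fun c => c.2 = tstar)).Nonempty := by
      simp only [hR, Finset.mem_image] at htstar
      obtain ⟨c, hc, hct⟩ := htstar
      exact ⟨c, Finset.mem_filter.2 ⟨hc, hct⟩⟩
    exact this.card_pos
  · calc A.card = ∑ t ∈ R, n t := Finset.card_eq_sum_card_image Prod.snd A
      _ ≤ ∑ t ∈ R, n tstar := Finset.sum_le_sum (fun t ht => hmaxrow t ht)
      _ = R.card * n tstar := by rw [Finset.sum_const, smul_eq_mul]
  · -- the main chain
    have split : (UU A).card =
        ∑ s ∈ Lv.filter (fun s => s ≤ tstar), F s +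
        ∑ s ∈ Lv.filter (fun s => ¬ s ≤ tstar), F s := by
      rw [hcardUU, Finset.sum_filter_add_sum_filter_not]
    have part1 : ∑ t ∈ R.filter (fun t => t ≤ tstar), (n t + 1) ≤
        ∑ s ∈ Lv.filter (fun s => s ≤ tstar), F s := by
      calc ∑ t ∈ R.filter (fun t => t ≤ tstar), (n t + 1)
          ≤ ∑ t ∈ R.filter (fun t => t ≤ tstar), (g t).card :=
            Finset.sum_le_sum (fun t ht => hgcard t (Finset.mem_filter.1 ht).1)
        _ ≤ ∑ t ∈ R.filter (fun t => t ≤ tstar), F t :=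
            Finset.sum_le_sum (fun t _ => hgF1 t)
        _ ≤ ∑ s ∈ Lv.filter (fun s => s ≤ tstar), F s := by
            apply Finset.sum_le_sum_of_subset
            intro t ht
            have ht' := Finset.mem_filter.1 ht
            exact Finset.mem_filter.2 ⟨(hRL t ht'.1).1, ht'.2⟩
    have part2 : ∑ t ∈ R.filter (fun t => tstar ≤ t), (n t + 1) ≤
        ∑ s ∈ Lv.filter (fun s => ¬ s ≤ tstar), F s := by
      calc ∑ t ∈ R.filter (fun t => tstar ≤ t), (n t + 1)
          ≤ ∑ t ∈ R.filter (fun t => tstar ≤ t), (g t).card :=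
            Finset.sum_le_sum (fun t ht => hgcard t (Finset.mem_filter.1 ht).1)
        _ ≤ ∑ t ∈ R.filter (fun t => tstar ≤ t), F (t + 1) :=
            Finset.sum_le_sum (fun t _ => hgF2 t)
        _ = ∑ s ∈ (R.filter (fun t => tstar ≤ t)).image (· + 1), F s := by
            rw [Finset.sum_image (by intro a _ b _ h; have h' : a + 1 = b + 1 := h; omega)]
        _ ≤ ∑ s ∈ Lv.filter (fun s => ¬ s ≤ tstar), F s := by
            apply Finset.sum_le_sum_of_subset
            intro s hs
            obtain ⟨t, ht, rfl⟩ := Finset.mem_image.1 hs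
            have ht' := Finset.mem_filter.1 ht
            refine Finset.mem_filter.2 ⟨(hRL t ht'.1).2, by omega⟩
    have partsum : ∑ t ∈ R, (n t + 1) + (n tstar + 1) =
        ∑ t ∈ R.filter (fun t => t ≤ tstar), (n t + 1) +
        ∑ t ∈ R.filter (fun t => tstar ≤ t), (n t + 1) := by
      have e1 : R.filter (fun t => tstar ≤ t) =
          insert tstar (R.filter (fun t => tstar < t)) := by
        ext t
        simp only [Finset.mem_insert, Finset.mem_filter]
        constructor
        · rintro ⟨h1, h2⟩
          rcases eq_or_lt_of_le h2 with h | h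
          · exact Or.inl h.symm
          · exact Or.inr ⟨h1, h⟩
        · rintro (rfl | ⟨h1, h2⟩)
          · exact ⟨htstar, le_refl _⟩
          · exact ⟨h1, le_of_lt h2⟩
      have e2 : tstar ∉ R.filter (fun t => tstar < t) := by
        simp
      rw [e1, Finset.sum_insert e2]
      have e3 : R.filter (fun t => tstar < t) = R.filter (fun t => ¬ t ≤ tstar) := by
        apply Finset.filter_congr; intro t _; simp
      rw [e3, ← Finset.sum_filter_add_sum_filter_not R (fun t => t ≤ tstar) (fun t => n t + 1)]
      ring
    have final : A.card + R.card + n tstar + 1 ≤ (UU A).card := by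
      have hAc : A.card = ∑ t ∈ R, n t := Finset.card_eq_sum_card_image Prod.snd A
      have : ∑ t ∈ R, (n t + 1) = A.card + R.card := by
        rw [Finset.sum_add_distrib, Finset.sum_const, smul_eq_mul, mul_one, hAc]
      omega
    exact final
section Std

lemma UU_image_le (A : Finset Cell) (φ g : Cell → Cell)
    (h : ∀ c, uset (φ c) ⊆ (uset c).image g) :
    (UU (A.image φ)).card ≤ (UU A).card := by
  classical
  have h1 : UU (A.image φ) ⊆ (UU A).image g := by
    intro v hv
    obtain ⟨c', hc', hv'⟩ := Finset.mem_biUnion.1 hv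
    obtain ⟨c, hc, rfl⟩ := Finset.mem_image.1 hc'
    obtain ⟨w, hw, rfl⟩ := Finset.mem_image.1 (h c hv')
    exact Finset.mem_image.2 ⟨w, Finset.mem_biUnion.2 ⟨c, hc, hw⟩, rfl⟩
  calc (UU (A.image φ)).card ≤ ((UU A).image g).card := Finset.card_le_card h1
    _ ≤ (UU A).card := Finset.card_image_le

lemma UU_dihedral_le (A : Finset Cell) (f : Cell → Cell) (hf : f ∈ dihedralMaps) (t : Cell) :
    (UU (A.image (fun c => ((f c).1 + t.1, (f c).2 + t.2)))).card ≤ (UU A).card := by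
  simp only [dihedralMaps, List.mem_cons, List.mem_singleton] at hf
  obtain ⟨t1, t2⟩ := t
  rcases hf with rfl | rfl | rfl | rfl | rfl | rfl | rfl | rfl | h
  · exact UU_image_le A _ (fun d => (d.1 + t1, d.2 + t2)) (by
      intro c v hv; simp only [uset, Finset.mem_insert, Finset.mem_singleton,
        Finset.image_insert, Finset.image_singleton, Prod.ext_iff] at hv ⊢; omega)
  · exact UU_image_le A _ (fun d => (-d.1 + 1 + t1, d.2 + t2)) (by
      intro c v hv; simp only [uset, Finset.mem_insert, Finset.mem_singleton,
        Finset.image_insert, Finset.image_singleton, Prod.ext_iff] at hv ⊢; omega)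
  · exact UU_image_le A _ (fun d => (d.1 + t1, -d.2 + 1 + t2)) (by
      intro c v hv; simp only [uset, Finset.mem_insert, Finset.mem_singleton,
        Finset.image_insert, Finset.image_singleton, Prod.ext_iff] at hv ⊢; omega)
  · exact UU_image_le A _ (fun d => (-d.1 + 1 + t1, -d.2 + 1 + t2)) (by
      intro c v hv; simp only [uset, Finset.mem_insert, Finset.mem_singleton,
        Finset.image_insert, Finset.image_singleton, Prod.ext_iff] at hv ⊢; omega)
  · exact UU_image_le A _ (fun d => (d.2 + t1, d.1 + t2)) (by
      intro c v hv; simp only [uset, Finset.mem_insert, Finset.mem_singleton,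
        Finset.image_insert, Finset.image_singleton, Prod.ext_iff] at hv ⊢; omega)
  · exact UU_image_le A _ (fun d => (-d.2 + 1 + t1, d.1 + t2)) (by
      intro c v hv; simp only [uset, Finset.mem_insert, Finset.mem_singleton,
        Finset.image_insert, Finset.image_singleton, Prod.ext_iff] at hv ⊢; omega)
  · exact UU_image_le A _ (fun d => (d.2 + t1, -d.1 + 1 + t2)) (by
      intro c v hv; simp only [uset, Finset.mem_insert, Finset.mem_singleton,
        Finset.image_insert, Finset.image_singleton, Prod.ext_iff] at hv ⊢; omega)
  · exact UU_image_le A _ (fun d => (-d.2 + 1 + t1, -d.1 + 1 + t2)) (by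
      intro c v hv; simp only [uset, Finset.mem_insert, Finset.mem_singleton,
        Finset.image_insert, Finset.image_singleton, Prod.ext_iff] at hv ⊢; omega)
  · exact absurd h List.not_mem_nil

lemma dihedral_inj (f : Cell → Cell) (hf : f ∈ dihedralMaps) (t : Cell) :
    Function.Injective (fun c => (((f c).1 + t.1, (f c).2 + t.2) : Cell)) := by
  simp only [dihedralMaps, List.mem_cons, List.mem_singleton] at hf
  rcases hf with rfl | rfl | rfl | rfl | rfl | rfl | rfl | rfl | h
  all_goals first
    | (intro a b hab; simp only [Prod.mk.injEq, Prod.ext_iff] at hab ⊢; omega)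
    | exact absurd h List.not_mem_nil

lemma baseStd_card (l ζ a k' : ℕ) :
    (baseStd l ζ a k').card = l * (l + ζ) + k' := by
  classical
  rw [baseStd, Finset.card_union_of_disjoint]
  · rw [Finset.card_image_of_injective _ (by
      intro p q hpq
      simp only [Prod.mk.injEq] at hpq
      exact Prod.ext (by exact_mod_cast hpq.1) (by exact_mod_cast hpq.2)),
      Finset.card_image_of_injective _ (by
      intro p q hpq
      simp only [Prod.mk.injEq] at hpq
      omega),
      Finset.card_product, Finset.card_range, Finset.card_range, Finset.card_range]
    ring
  · rw [Finset.disjoint_left]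
    rintro c hc hc'
    obtain ⟨q, hq, rfl⟩ := Finset.mem_image.1 hc
    obtain ⟨i, _, hi⟩ := Finset.mem_image.1 hc'
    simp only [Finset.mem_product, Finset.mem_range] at hq
    have h2 := congrArg Prod.snd hi
    simp only at h2
    have : q.2 < l := hq.2
    omega

lemma UU_baseStd_le (l ζ a k' : ℕ) (hl : 1 ≤ l) (hζ : ζ ≤ 1) (hak : a + k' ≤ l + ζ) :
    (UU (baseStd l ζ a k')).card ≤
      (l + ζ + 1) * (l + 1) + (if k' = 0 then 0 else k' + 1) := by
  classical
  set G : Finset Cell := Finset.Icc (0 : ℤ) (l + ζ) ×ˢ Finset.Icc (0 : ℤ) l with hG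
  set Top : Finset Cell := Finset.Icc (a : ℤ) (a + k') ×ˢ {((l : ℤ) + 1)} with hTop
  have hGcard : G.card = (l + ζ + 1) * (l + 1) := by
    rw [hG, Finset.card_product, Int.card_Icc, Int.card_Icc]
    simp
    omega
  have hTopcard : Top.card = k' + 1 := by
    rw [hTop, Finset.card_product, Int.card_Icc, Finset.card_singleton, mul_one]
    omega
  have hsub : UU (baseStd l ζ a k') ⊆ G ∪ Top := by
    intro v hv
    obtain ⟨c, hc, hvc⟩ := Finset.mem_biUnion.1 hv
    rw [baseStd, Finset.mem_union] at hc
    simp only [uset, Finset.mem_insert, Finset.mem_singleton] at hvc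
    rcases hc with hc | hc
    · obtain ⟨q, hq, rfl⟩ := Finset.mem_image.1 hc
      simp only [Finset.mem_product, Finset.mem_range] at hq
      apply Finset.mem_union_left
      simp only [hG, Finset.mem_product, Finset.mem_Icc]
      rcases hvc with rfl | rfl | rfl | rfl <;> constructor <;> constructor <;> omega
    · obtain ⟨i, hi, rfl⟩ := Finset.mem_image.1 hc
      simp only [Finset.mem_range] at hi
      rcases hvc with rfl | rfl | rfl | rfl
      · apply Finset.mem_union_left
        simp only [hG, Finset.mem_product, Finset.mem_Icc]; constructor <;> constructor <;> omega
      · apply Finset.mem_union_left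
        simp only [hG, Finset.mem_product, Finset.mem_Icc]; constructor <;> constructor <;> omega
      · apply Finset.mem_union_right
        simp only [hTop, Finset.mem_product, Finset.mem_Icc, Finset.mem_singleton]
        constructor
        · constructor <;> omega
        · trivial
      · apply Finset.mem_union_right
        simp only [hTop, Finset.mem_product, Finset.mem_Icc, Finset.mem_singleton]
        constructor
        · constructor <;> omega
        · trivial
  by_cases hk0 : k' = 0
  · subst hk0
    have hsub' : UU (baseStd l ζ a 0) ⊆ G := by
      intro v hv
      obtain ⟨c, hc, hvc⟩ := Finset.mem_biUnion.1 hv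
      rw [baseStd, Finset.mem_union] at hc
      simp only [uset, Finset.mem_insert, Finset.mem_singleton] at hvc
      rcases hc with hc | hc
      · obtain ⟨q, hq, rfl⟩ := Finset.mem_image.1 hc
        simp only [Finset.mem_product, Finset.mem_range] at hq
        simp only [hG, Finset.mem_product, Finset.mem_Icc]
        rcases hvc with rfl | rfl | rfl | rfl <;> constructor <;> constructor <;> omega
      · simp at hc
    simp only [if_pos rfl, add_zero]
    calc (UU (baseStd l ζ a 0)).card ≤ G.card := Finset.card_le_card hsub'
      _ = (l + ζ + 1) * (l + 1) := hGcard
  · rw [if_neg hk0]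
    calc (UU (baseStd l ζ a k')).card ≤ (G ∪ Top).card := Finset.card_le_card hsub
      _ ≤ G.card + Top.card := Finset.card_union_le _ _
      _ = (l + ζ + 1) * (l + 1) + (k' + 1) := by rw [hGcard, hTopcard]

end Std
section Arith

lemma arith_one (l ζ k' r m : ℕ) (hl : 1 ≤ l) (hζ : ζ ≤ 1) (hr : 1 ≤ r) (hm : 1 ≤ m)
    (h : l * (l + ζ) + k' ≤ r * m) :
    2 * l + ζ + (if k' = 0 then 0 else 1) ≤ r + m := by
  by_contra hcon
  push_neg at hcon
  have key : 4 * (r * m) ≤ (r + m) * (r + m) := by nlinarith [sq_nonneg ((r : ℤ) - m)]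
  by_cases hk0 : k' = 0
  · subst hk0
    rw [if_pos rfl] at hcon
    interval_cases ζ <;> nlinarith
  · rw [if_neg hk0] at hcon
    have : 1 ≤ k' := Nat.one_le_iff_ne_zero.2 hk0
    interval_cases ζ <;> nlinarith

lemma qa (l S : ℤ) (hl : 1 ≤ l) (hS : 4 ≤ S) (h1 : S ≤ 2*l - 2)
    (h2 : 4*(l*l) ≤ (S-2)*(S-2)+4) : False := by
  nlinarith [mul_nonneg (by omega : (0:ℤ) ≤ 2*l - 2 - (S - 2))
    (by omega : (0:ℤ) ≤ 2*l - 2 + (S - 2))]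

lemma qb (l kp S : ℤ) (hl : 1 ≤ l) (hkp : 1 ≤ kp) (hS : 4 ≤ S) (h1 : S ≤ 2*l - 1)
    (h2 : 4*(l*l+kp) ≤ (S-2)*(S-2)+4) : False := by
  nlinarith [mul_nonneg (by omega : (0:ℤ) ≤ 2*l - 1 - (S - 2))
    (by omega : (0:ℤ) ≤ 2*l - 1 + (S - 2))]

lemma qc (l S : ℤ) (hl : 1 ≤ l) (hS : 4 ≤ S) (h1 : S ≤ 2*l - 1)
    (h2 : 4*(l*l+l) ≤ (S-2)*(S-2)+4) : False := by
  nlinarith [mul_nonneg (by omega : (0:ℤ) ≤ 2*l - 1 - (S - 2))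
    (by omega : (0:ℤ) ≤ 2*l - 1 + (S - 2))]

lemma qd (l kp S : ℤ) (hl : 1 ≤ l) (hkp : 1 ≤ kp) (hS : 4 ≤ S) (h1 : S ≤ 2*l)
    (h2 : 4*(l*l+l+kp) ≤ (S-2)*(S-2)+4) : False := by
  nlinarith [mul_nonneg (by omega : (0:ℤ) ≤ 2*l - (S - 2))
    (by omega : (0:ℤ) ≤ 2*l + (S - 2))]

lemma arith_two (l ζ k' r₀ m₀ r₁ m₁ k₀ k₁ : ℕ) (hl : 1 ≤ l) (hζ : ζ ≤ 1)
    (hk₀ : 1 ≤ k₀) (hk₁ : 1 ≤ k₁) (hk : k₀ + k₁ = l * (l + ζ) + k')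
    (h0 : k₀ ≤ r₀ * m₀) (h1 : k₁ ≤ r₁ * m₁)
    (hr₀ : 1 ≤ r₀) (hm₀ : 1 ≤ m₀) (hr₁ : 1 ≤ r₁) (hm₁ : 1 ≤ m₁) :
    2 * l + ζ + (if k' = 0 then 0 else 1) ≤ r₀ + m₀ + r₁ + m₁ + 1 := by
  by_contra hcon
  push_neg at hcon
  have key0 : 4 * (k₀ : ℤ) ≤ ((r₀ : ℤ) + m₀) * ((r₀ : ℤ) + m₀) := by
    have : (k₀ : ℤ) ≤ (r₀ : ℤ) * m₀ := by exact_mod_cast h0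
    nlinarith [sq_nonneg ((r₀ : ℤ) - m₀)]
  have key1 : 4 * (k₁ : ℤ) ≤ ((r₁ : ℤ) + m₁) * ((r₁ : ℤ) + m₁) := by
    have : (k₁ : ℤ) ≤ (r₁ : ℤ) * m₁ := by exact_mod_cast h1
    nlinarith [sq_nonneg ((r₁ : ℤ) - m₁)]
  have hg0 : 2 ≤ (r₀ : ℤ) + m₀ := by push_cast; omega
  have hg1 : 2 ≤ (r₁ : ℤ) + m₁ := by push_cast; omega
  have key2 : ((r₀ : ℤ) + m₀) * ((r₀ : ℤ) + m₀) + ((r₁ : ℤ) + m₁) * ((r₁ : ℤ) + m₁) ≤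
      (((r₀ : ℤ) + m₀ + r₁ + m₁) - 2) * (((r₀ : ℤ) + m₀ + r₁ + m₁) - 2) + 4 := by
    nlinarith [mul_nonneg (by omega : (0:ℤ) ≤ (r₀:ℤ) + m₀ - 2)
      (by omega : (0:ℤ) ≤ (r₁:ℤ) + m₁ - 2)]
  have hkZ : (k₀ : ℤ) + k₁ = (l : ℤ) * ((l : ℤ) + ζ) + k' := by exact_mod_cast hk
  have main : 4 * ((l : ℤ) * ((l : ℤ) + ζ) + k') ≤
      (((r₀ : ℤ) + m₀ + r₁ + m₁) - 2) * (((r₀ : ℤ) + m₀ + r₁ + m₁) - 2) + 4 := by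
    omega
  have hS4 : 4 ≤ (r₀ : ℤ) + m₀ + r₁ + m₁ := by omega
  have hlZ : 1 ≤ (l : ℤ) := by exact_mod_cast hl
  by_cases hk0 : k' = 0
  · subst hk0
    rw [if_pos rfl] at hcon
    rcases Nat.le_one_iff_eq_zero_or_eq_one.mp hζ with rfl | rfl
    · refine qa (l : ℤ) ((r₀ : ℤ) + m₀ + r₁ + m₁) hlZ hS4 (by push_cast at hcon ⊢; omega)
        (by linarith [main])
    · refine qc (l : ℤ) ((r₀ : ℤ) + m₀ + r₁ + m₁) hlZ hS4 (by push_cast at hcon ⊢; omega)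
        (by linarith [main])
  · rw [if_neg hk0] at hcon
    have hk'1 : 1 ≤ (k' : ℤ) := by exact_mod_cast Nat.one_le_iff_ne_zero.2 hk0
    rcases Nat.le_one_iff_eq_zero_or_eq_one.mp hζ with rfl | rfl
    · refine qb (l : ℤ) (k' : ℤ) ((r₀ : ℤ) + m₀ + r₁ + m₁) hlZ hk'1 hS4
        (by push_cast at hcon ⊢; omega) (by linarith [main])
    · refine qd (l : ℤ) (k' : ℤ) ((r₀ : ℤ) + m₀ + r₁ + m₁) hlZ hk'1 hS4
        (by push_cast at hcon ⊢; omega) (by linarith [main])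

end Arith
section Struct

lemma inner1_subset (Λ : Finset Site) : inner1 Λ ⊆ Λ := Finset.sdiff_subset

lemma inner2_nbrs {Λ : Finset Site} {x : Site} (h : x ∈ inner2 Λ) :
    nbrs x ⊆ inner1 Λ := by
  rw [inner2, Finset.mem_sdiff] at h
  obtain ⟨h1, h2⟩ := h
  by_contra hcon
  exact h2 (Finset.mem_filter.2 ⟨h1, hcon⟩)

lemma tiled_struct {Λ : Finset Site} {k : ℕ} {ξ : Config Λ} (hξ : ξ ∈ VTiled Λ k) :
    (∀ y, ξ.val y = 2 → ∀ z ∈ nbrs y, z ∈ inner1 Λ ∧ ξ.val z = 1) ∧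
    Λ.filter (fun x => ξ.val x = 1) = (Λ.filter (fun x => ξ.val x = 2)).biUnion nbrs := by
  classical
  obtain ⟨⟨hn2, hin⟩, hb, hiso⟩ := hξ
  set T₂ : Finset Site := Λ.filter (fun x => ξ.val x = 2) with hT₂
  set G : Finset (Site × Site) := (inner1 Λ ×ˢ inner1 Λ).filter
    (fun p => adjacent p.1 p.2 ∧ ξ.val p.1 = 1 ∧ ξ.val p.2 = 2) with hG
  have hGmem : ∀ p : Site × Site, p ∈ G ↔ (p.1 ∈ inner1 Λ ∧ p.2 ∈ inner1 Λ ∧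
      adjacent p.1 p.2 ∧ ξ.val p.1 = 1 ∧ ξ.val p.2 = 2) := by
    intro p
    simp only [hG, Finset.mem_filter, Finset.mem_product]
    tauto
  have hGcard : G.card = 4 * k := hb
  have hfib : ∀ p ∈ G, p.2 ∈ T₂ := by
    intro p hp
    rw [hGmem] at hp
    exact Finset.mem_filter.2 ⟨inner1_subset Λ hp.2.1, hp.2.2.2.2⟩
  have hsum : G.card = ∑ y ∈ T₂, (G.filter (fun p => p.2 = y)).card :=
    Finset.card_eq_sum_card_fiberwise hfib
  have hle : ∀ y ∈ T₂, (G.filter (fun p => p.2 = y)).card ≤ 4 := by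
    intro y _
    calc (G.filter (fun p => p.2 = y)).card ≤ (nbrs y).card := by
          apply Finset.card_le_card_of_injOn (fun p => p.1)
          · intro p hp
            rw [Finset.mem_coe, Finset.mem_filter, hGmem] at hp
            rw [Finset.mem_coe, nbrs_symm, mem_nbrs, ← hp.2]
            exact hp.1.2.2.1
          · intro p hp q hq hpq
            rw [Finset.mem_coe, Finset.mem_filter] at hp hq
            exact Prod.ext hpq (hp.2.trans hq.2.symm)
      _ = 4 := card_nbrs y
  have hT₂card : T₂.card = k := hn2
  have heq : ∀ y ∈ T₂, (G.filter (fun p => p.2 = y)).card = 4 := by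
    have h4 : ∑ y ∈ T₂, (G.filter (fun p => p.2 = y)).card = ∑ y ∈ T₂, 4 := by
      rw [← hsum, hGcard, Finset.sum_const, smul_eq_mul, hT₂card, Nat.mul_comm]
    intro y hy
    by_contra hne
    have hlt : (G.filter (fun p => p.2 = y)).card < 4 := lt_of_le_of_ne (hle y hy) hne
    have : ∑ y ∈ T₂, (G.filter (fun p => p.2 = y)).card < ∑ y ∈ T₂, 4 :=
      Finset.sum_lt_sum (fun i hi => hle i hi) ⟨y, hy, hlt⟩
    omega
  have claimA : ∀ y, ξ.val y = 2 → ∀ z ∈ nbrs y, z ∈ inner1 Λ ∧ ξ.val z = 1 := by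
    intro y hy2 z hz
    have hyΛ : y ∈ Λ := inner1_subset Λ (Finset.sdiff_subset (hin y hy2))
    have hyT : y ∈ T₂ := Finset.mem_filter.2 ⟨hyΛ, hy2⟩
    have himg : (G.filter (fun p => p.2 = y)).image (fun p => p.1) = nbrs y := by
      apply Finset.eq_of_subset_of_card_le
      · intro w hw
        obtain ⟨p, hp, rfl⟩ := Finset.mem_image.1 hw
        rw [Finset.mem_filter, hGmem] at hp
        rw [nbrs_symm, mem_nbrs, ← hp.2]
        exact hp.1.2.2.1
      · rw [card_nbrs, Finset.card_image_of_injOn, heq y hyT]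
        intro p hp q hq hpq
        rw [Finset.mem_coe, Finset.mem_filter] at hp hq
        exact Prod.ext hpq (hp.2.trans hq.2.symm)
    rw [← himg] at hz
    obtain ⟨p, hp, rfl⟩ := Finset.mem_image.1 hz
    rw [Finset.mem_filter, hGmem] at hp
    exact ⟨hp.1.1, hp.1.2.2.2.1⟩
  refine ⟨claimA, ?_⟩
  ext x
  simp only [Finset.mem_filter, Finset.mem_biUnion]
  constructor
  · rintro ⟨hxΛ, hx1⟩
    obtain ⟨y, hy, hy2⟩ := hiso x hx1
    have hyΛ : y ∈ Λ := by
      by_contra hcon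
      rw [ξ.zero_outside y hcon] at hy2
      exact absurd hy2 (by decide)
    exact ⟨y, Finset.mem_filter.2 ⟨hyΛ, hy2⟩, nbrs_symm.1 hy⟩
  · rintro ⟨y, hy, hxy⟩
    have hy' := Finset.mem_filter.1 hy
    have := claimA y hy'.2 x hxy
    exact ⟨inner1_subset Λ this.1, this.2⟩

lemma sum_decomp (S : Finset Site) :
    (S.biUnion nbrs).card =
      ((S.filter (fun x => (x.1 + x.2) % 2 = 0)).biUnion nbrs).card +
      ((S.filter (fun x => (x.1 + x.2) % 2 = 1)).biUnion nbrs).card := by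
  classical
  set S₀ := S.filter (fun x => (x.1 + x.2) % 2 = 0) with hS₀
  set S₁ := S.filter (fun x => (x.1 + x.2) % 2 = 1) with hS₁
  have hsplit : S.biUnion nbrs = S₀.biUnion nbrs ∪ S₁.biUnion nbrs := by
    ext z
    simp only [Finset.mem_biUnion, Finset.mem_union, hS₀, hS₁, Finset.mem_filter]
    constructor
    · rintro ⟨y, hy, hz⟩
      rcases (by omega : (y.1 + y.2) % 2 = 0 ∨ (y.1 + y.2) % 2 = 1) with h | h
      · exact Or.inl ⟨y, ⟨hy, h⟩, hz⟩
      · exact Or.inr ⟨y, ⟨hy, h⟩, hz⟩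
    · rintro (⟨y, ⟨hy, _⟩, hz⟩ | ⟨y, ⟨hy, _⟩, hz⟩) <;> exact ⟨y, hy, hz⟩
  have hdisj : Disjoint (S₀.biUnion nbrs) (S₁.biUnion nbrs) := by
    rw [Finset.disjoint_left]
    intro z hz0 hz1
    obtain ⟨y, hy, hzy⟩ := Finset.mem_biUnion.1 hz0
    obtain ⟨w, hw, hzw⟩ := Finset.mem_biUnion.1 hz1
    have h1 := parity_nbrs hzy
    have h2 := parity_nbrs hzw
    have hy' := (Finset.mem_filter.1 hy).2
    have hw' := (Finset.mem_filter.1 hw).2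
    omega
  rw [hsplit, Finset.card_union_of_disjoint hdisj]

lemma even_border (S : Finset Site) (hS : ∀ x ∈ S, (x.1 + x.2) % 2 = 0) :
    (S.biUnion nbrs).card =
      (UU (S.image (fun x => (((cellOf x).1 - 1, (cellOf x).2 - 1) : Cell)))).card ∧
    (S.image (fun x => (((cellOf x).1 - 1, (cellOf x).2 - 1) : Cell))).card = S.card := by
  classical
  constructor
  · have himg : (S.biUnion nbrs).image cellOf =
        UU (S.image (fun x => (((cellOf x).1 - 1, (cellOf x).2 - 1) : Cell))) := by
      rw [UU, Finset.image_biUnion, Finset.biUnion_image]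
      apply Finset.biUnion_congr rfl
      intro x hx
      rw [image_nbrs_even (hS x hx)]
    rw [← himg]
    symm
    apply Finset.card_image_of_injOn
    intro z hz w hw hzw
    rw [Finset.mem_coe, Finset.mem_biUnion] at hz hw
    obtain ⟨y, hy, hzy⟩ := hz
    obtain ⟨v, hv, hwv⟩ := hw
    have p1 := parity_nbrs hzy
    have p2 := parity_nbrs hwv
    exact cellOf_injOn_parity (by rw [hS y hy] at p1; rw [hS v hv] at p2; omega) hzw
  · apply Finset.card_image_of_injOn
    intro z hz w hw hzw
    rw [Prod.mk.injEq] at hzw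
    have : cellOf z = cellOf w := Prod.ext (by omega) (by omega)
    exact cellOf_injOn_parity (by rw [hS z hz, hS w hw]) this

lemma odd_border (S : Finset Site) (hS : ∀ x ∈ S, (x.1 + x.2) % 2 = 1) :
    (S.biUnion nbrs).card = (UU (S.image cellOf)).card ∧
    (S.image cellOf).card = S.card := by
  classical
  constructor
  · have himg : (S.biUnion nbrs).image cellOf = UU (S.image cellOf) := by
      rw [UU, Finset.image_biUnion, Finset.biUnion_image]
      apply Finset.biUnion_congr rfl
      intro x hx
      rw [image_nbrs_odd (hS x hx)]
    rw [← himg]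
    symm
    apply Finset.card_image_of_injOn
    intro z hz w hw hzw
    rw [Finset.mem_coe, Finset.mem_biUnion] at hz hw
    obtain ⟨y, hy, hzy⟩ := hz
    obtain ⟨v, hv, hwv⟩ := hw
    have p1 := parity_nbrs hzy
    have p2 := parity_nbrs hwv
    exact cellOf_injOn_parity (by rw [hS y hy] at p1; rw [hS v hv] at p2; omega) hzw
  · apply Finset.card_image_of_injOn
    intro z hz w hw hzw
    exact cellOf_injOn_parity (by rw [hS z hz, hS w hw]) hzw

end Struct
/-- within V_{*,n₂}^{4n₂}, the standard configurations achieve the minimal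
energy. -/
theorem standard_configurations_minimize_energy
    (U Δ1 Δ2 : ℝ) (hU : 0 < U) (hΔ1 : 0 < Δ1) (hΔ1U : Δ1 < U)
    (hgap : 2 * U < Δ2 - Δ1) (hsum : Δ1 + Δ2 < 4 * U)
    (L : ℕ) (hL : 2 * lstar U Δ1 Δ2 < (L : ℤ))
    (k : ℕ) (hk : k ≤ L ^ 2)
    (η : Config (latBox L)) (hη : η ∈ VTiled (latBox L) k) (hstd : IsStandardConfig η) :
    ∀ ξ ∈ VTiled (latBox L) k, energy U Δ1 Δ2 η ≤ energy U Δ1 Δ2 ξ := by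
  classical
  intro ξ hξ
  have hn2η : numType2 η = k := hη.1.1
  have hn2ξ : numType2 ξ = k := hξ.1.1
  have hbη : numBonds η = 4 * k := hη.2.1
  have hbξ : numBonds ξ = 4 * k := hξ.2.1
  have key : numType1 η ≤ numType1 ξ := by
    have stη := tiled_struct hη
    have stξ := tiled_struct hξ
    have n1η : numType1 η = (((latBox L).filter (fun x => η.val x = 2)).biUnion nbrs).card := by
      rw [numType1, stη.2]
    have n1ξ : numType1 ξ = (((latBox L).filter (fun x => ξ.val x = 2)).biUnion nbrs).card := by
      rw [numType1, stξ.2]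
    by_cases hk0 : k = 0
    · have hempty : (latBox L).filter (fun x => η.val x = 2) = ∅ := by
        apply Finset.card_eq_zero.1
        rw [← numType2, hn2η, hk0]
      rw [n1η, hempty]
      simp
    -- k ≥ 1
    obtain ⟨hpar, l, ζ, a, k', hl, hζ, hak, f, hf, t, hA⟩ := hstd
    set Sη : Finset Site := (latBox L).filter (fun x => η.val x = 2) with hSη
    set Sξ : Finset Site := (latBox L).filter (fun x => ξ.val x = 2) with hSξ
    have hcSη : Sη.card = k := hn2η
    obtain ⟨x₀, hx₀⟩ := Finset.card_pos.1 (by omega : 0 < Sη.card)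
    have hx₀2 : η.val x₀ = 2 := (Finset.mem_filter.1 hx₀).2
    have hallp : ∀ x ∈ Sη, (x.1 + x.2) % 2 = (x₀.1 + x₀.2) % 2 := by
      intro x hx
      exact hpar x x₀ (Finset.mem_filter.1 hx).2 hx₀2
    have htile : tileSupport η = Sη.image cellOf := rfl
    -- k = l*(l+ζ) + k'
    have hkval : l * (l + ζ) + k' = k := by
      have h1 : (tileSupport η).card = Sη.card := by
        rw [htile]
        apply Finset.card_image_of_injOn
        intro z hz w hw hzw
        exact cellOf_injOn_parity
          (by rw [hallp z hz, hallp w hw]) hzw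
      have h2 : (tileSupport η).card = l * (l + ζ) + k' := by
        rw [hA, Finset.card_image_of_injective _ (dihedral_inj f hf t), baseStd_card]
      omega
    have hring : (l + ζ + 1) * (l + 1) = l * (l + ζ) + 2 * l + ζ + 1 := by ring
    -- upper bound for η
    have hηUB : numType1 η ≤ k + (2 * l + ζ) + (if k' = 0 then 0 else 1) + 1 := by
      rcases (by omega : (x₀.1 + x₀.2) % 2 = 0 ∨ (x₀.1 + x₀.2) % 2 = 1) with hp | hp
      · have hS0 : ∀ x ∈ Sη, (x.1 + x.2) % 2 = 0 := by
          intro x hx; rw [hallp x hx, hp]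
        obtain ⟨hcard_eq, _⟩ := even_border Sη hS0
        have himg : Sη.image (fun x => (((cellOf x).1 - 1, (cellOf x).2 - 1) : Cell)) =
            (baseStd l ζ a k').image
              (fun c => (((f c).1 + ((t.1 - 1, t.2 - 1) : Cell).1,
                (f c).2 + ((t.1 - 1, t.2 - 1) : Cell).2) : Cell)) := by
          have e1 : Sη.image (fun x => (((cellOf x).1 - 1, (cellOf x).2 - 1) : Cell)) =
              (tileSupport η).image (fun c : Cell => ((c.1 - 1, c.2 - 1) : Cell)) := by
            rw [htile, Finset.image_image]
            rfl
          rw [e1, hA, Finset.image_image]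
          apply Finset.image_congr
          intro c _
          simp only [Function.comp_apply, Prod.mk.injEq]
          constructor <;> ring
        rw [n1η, hcard_eq, himg]
        calc (UU ((baseStd l ζ a k').image
              (fun c => (((f c).1 + ((t.1 - 1, t.2 - 1) : Cell).1,
                (f c).2 + ((t.1 - 1, t.2 - 1) : Cell).2) : Cell)))).card
            ≤ (UU (baseStd l ζ a k')).card := UU_dihedral_le _ f hf _
          _ ≤ (l + ζ + 1) * (l + 1) + (if k' = 0 then 0 else k' + 1) :=
              UU_baseStd_le l ζ a k' hl hζ hak
          _ ≤ k + (2 * l + ζ) + (if k' = 0 then 0 else 1) + 1 := by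
              by_cases h : k' = 0 <;> simp [h] <;> omega
      · have hS1 : ∀ x ∈ Sη, (x.1 + x.2) % 2 = 1 := by
          intro x hx; rw [hallp x hx, hp]
        obtain ⟨hcard_eq, _⟩ := odd_border Sη hS1
        rw [n1η, hcard_eq, ← htile, hA]
        calc (UU ((baseStd l ζ a k').image
              (fun c => (((f c).1 + t.1, (f c).2 + t.2) : Cell)))).card
            ≤ (UU (baseStd l ζ a k')).card := UU_dihedral_le _ f hf t
          _ ≤ (l + ζ + 1) * (l + 1) + (if k' = 0 then 0 else k' + 1) :=
              UU_baseStd_le l ζ a k' hl hζ hak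
          _ ≤ k + (2 * l + ζ) + (if k' = 0 then 0 else 1) + 1 := by
              by_cases h : k' = 0 <;> simp [h] <;> omega
    -- lower bound for ξ
    set A₀ : Finset Site := Sξ.filter (fun x => (x.1 + x.2) % 2 = 0) with hA₀
    set A₁ : Finset Site := Sξ.filter (fun x => (x.1 + x.2) % 2 = 1) with hA₁
    have hdec : (Sξ.biUnion nbrs).card = (A₀.biUnion nbrs).card + (A₁.biUnion nbrs).card :=
      sum_decomp Sξ
    have hk01 : A₀.card + A₁.card = k := by
      have h1 : A₀.card + (Sξ.filter (fun x => ¬ (x.1 + x.2) % 2 = 0)).card = Sξ.card :=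
        Finset.card_filter_add_card_filter_not _
      have h2 : Sξ.filter (fun x => ¬ (x.1 + x.2) % 2 = 0) = A₁ := by
        apply Finset.filter_congr
        intro x _
        constructor
        · intro hh; omega
        · intro hh; omega
      rw [h2] at h1
      rw [h1]
      exact hn2ξ
    have hp₀ : ∀ x ∈ A₀, (x.1 + x.2) % 2 = 0 := fun x hx => (Finset.mem_filter.1 hx).2
    have hp₁ : ∀ x ∈ A₁, (x.1 + x.2) % 2 = 1 := fun x hx => (Finset.mem_filter.1 hx).2
    obtain ⟨e0, e0c⟩ := even_border A₀ hp₀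
    obtain ⟨e1, e1c⟩ := odd_border A₁ hp₁
    rw [n1ξ, hdec, e0, e1]
    by_cases h0 : A₀.card = 0
    · -- all odd
      have hA₁k : (A₁.image cellOf).card = k := by rw [e1c]; omega
      obtain ⟨r, m, hr, hm, hrm, hlow⟩ :=
        iso_lower (A₁.image cellOf) (Finset.card_pos.1 (by omega))
      have harith := arith_one l ζ k' r m hl hζ hr hm (by omega)
      have hz : (A₀.biUnion nbrs) = ∅ := by
        rw [Finset.card_eq_zero.1 h0]
        rfl
      rw [hA₁k] at hrm hlow
      omega
    · by_cases h1 : A₁.card = 0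
      · have hA₀k : (A₀.image (fun x => (((cellOf x).1 - 1, (cellOf x).2 - 1) : Cell))).card
            = k := by rw [e0c]; omega
        obtain ⟨r, m, hr, hm, hrm, hlow⟩ :=
          iso_lower (A₀.image (fun x => (((cellOf x).1 - 1, (cellOf x).2 - 1) : Cell)))
            (Finset.card_pos.1 (by omega))
        have harith := arith_one l ζ k' r m hl hζ hr hm (by omega)
        rw [hA₀k] at hrm hlow
        omega
      · -- both nonempty
        obtain ⟨r₀, m₀, hr₀, hm₀, hrm₀, hlow₀⟩ :=
          iso_lower (A₀.image (fun x => (((cellOf x).1 - 1, (cellOf x).2 - 1) : Cell)))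
            (Finset.card_pos.1 (by omega))
        obtain ⟨r₁, m₁, hr₁, hm₁, hrm₁, hlow₁⟩ :=
          iso_lower (A₁.image cellOf) (Finset.card_pos.1 (by omega))
        rw [e0c] at hrm₀ hlow₀
        rw [e1c] at hrm₁ hlow₁
        have harith := arith_two l ζ k' r₀ m₀ r₁ m₁ A₀.card A₁.card hl hζ
          (by omega) (by omega) (by omega) hrm₀ hrm₁ hr₀ hm₀ hr₁ hm₁
        omega
  -- energy comparison
  rw [energy, energy, hbη, hbξ, hn2η, hn2ξ]
  have hc : (numType1 η : ℝ) ≤ (numType1 ξ : ℝ) := by exact_mod_cast key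
  nlinarith [hΔ1, hc]
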